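/- Let p > 0, and let g be the Bergman metric of the ellipsoid E = {(z,w) ∈ ℂ² : |z|² + |w|^{2p} < 1}, i.e. g_{i j̄} = ∂²(log K)/∂z_i ∂z̄_j where K is the Bergman kernel of E. Then at any point of the form (z, 0) ∈ E with z real, the metric components are g_{1 1̄} = (2p+1)/(p·(1 - z²)²), g_{2 2̄} = 2(p+2)/((p+1)·(1 - z²)^{1/p}), and g_{1 2̄} = g_{2 1̄} = 0. -/

import Mathlib

noncomputable section

/-- The Bergman kernel of `E(1,1,p)` (D'Angelo's formula), polarized as a holomorphic
function of independent complex variables `z, z̄, w, w̄`: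
`K = c₁ φ^{-2+1/p} ψ^{-2} + c₂ φ^{-2+2/p} ψ^{-3}` with `φ = 1 - z z̄`,
`ψ = φ^{1/p} - w w̄`, `c₁ = (p-1)/(pπ²)`, `c₂ = 2/(pπ²)`. -/
def Kc (p : ℝ) (z zb w wb : ℂ) : ℂ :=
  (((p - 1) / (p * Real.pi ^ 2) : ℝ) : ℂ) * (1 - z * zb) ^ ((-2 + 1 / p : ℝ) : ℂ)
      * ((1 - z * zb) ^ ((1 / p : ℝ) : ℂ) - w * wb) ^ (-2 : ℂ)
    + ((2 / (p * Real.pi ^ 2) : ℝ) : ℂ) * (1 - z * zb) ^ ((-2 + 2 / p : ℝ) : ℂ)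
      * ((1 - z * zb) ^ ((1 / p : ℝ) : ℂ) - w * wb) ^ (-3 : ℂ)

/-- Wirtinger derivative `∂/∂z` (first slot). -/
def D1 (F : ℂ → ℂ → ℂ → ℂ → ℂ) : ℂ → ℂ → ℂ → ℂ → ℂ :=
  fun z zb w wb => deriv (fun t => F t zb w wb) z

/-- Wirtinger derivative `∂/∂z̄` (second slot). -/
def D1b (F : ℂ → ℂ → ℂ → ℂ → ℂ) : ℂ → ℂ → ℂ → ℂ → ℂ :=
  fun z zb w wb => deriv (fun t => F z t w wb) zb

/-- Wirtinger derivative `∂/∂w` (third slot). -/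
def D2 (F : ℂ → ℂ → ℂ → ℂ → ℂ) : ℂ → ℂ → ℂ → ℂ → ℂ :=
  fun z zb w wb => deriv (fun t => F z zb t wb) w

/-- Wirtinger derivative `∂/∂w̄` (fourth slot). -/
def D2b (F : ℂ → ℂ → ℂ → ℂ → ℂ) : ℂ → ℂ → ℂ → ℂ → ℂ :=
  fun z zb w wb => deriv (fun t => F z zb w t) wb

/-- `log K`. -/
def logK (p : ℝ) : ℂ → ℂ → ℂ → ℂ → ℂ :=
  fun z zb w wb => Complex.log (Kc p z zb w wb)

/-- Bergman metric component `g_{1 1̄} = ∂² log K / ∂z ∂z̄`. -/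
def g11 (p : ℝ) : ℂ → ℂ → ℂ → ℂ → ℂ := D1 (D1b (logK p))

/-- Bergman metric component `g_{1 2̄} = ∂² log K / ∂z ∂w̄`. -/
def g12 (p : ℝ) : ℂ → ℂ → ℂ → ℂ → ℂ := D1 (D2b (logK p))

/-- Bergman metric component `g_{2 1̄} = ∂² log K / ∂w ∂z̄`. -/
def g21 (p : ℝ) : ℂ → ℂ → ℂ → ℂ → ℂ := D2 (D1b (logK p))

/-- Bergman metric component `g_{2 2̄} = ∂² log K / ∂w ∂w̄`. -/
def g22 (p : ℝ) : ℂ → ℂ → ℂ → ℂ → ℂ := D2 (D2b (logK p))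

/-- `det g = g_{1 1̄} g_{2 2̄} - g_{1 2̄} g_{2 1̄}`. -/
def detg (p : ℝ) : ℂ → ℂ → ℂ → ℂ → ℂ :=
  fun z zb w wb => g11 p z zb w wb * g22 p z zb w wb - g12 p z zb w wb * g21 p z zb w wb

/-- `Ric_{1 1̄} = -∂² log det g / ∂z ∂z̄`. -/
def Ric11 (p : ℝ) : ℂ → ℂ → ℂ → ℂ → ℂ :=
  fun z zb w wb =>
    -(D1 (D1b fun a b c d => Complex.log (detg p a b c d)) z zb w wb)

/-- `Ric_{1 2̄}`. -/
def Ric12 (p : ℝ) : ℂ → ℂ → ℂ → ℂ → ℂ :=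
  fun z zb w wb =>
    -(D1 (D2b fun a b c d => Complex.log (detg p a b c d)) z zb w wb)

/-- `Ric_{2 1̄}`. -/
def Ric21 (p : ℝ) : ℂ → ℂ → ℂ → ℂ → ℂ :=
  fun z zb w wb =>
    -(D2 (D1b fun a b c d => Complex.log (detg p a b c d)) z zb w wb)

/-- `Ric_{2 2̄}`. -/
def Ric22 (p : ℝ) : ℂ → ℂ → ℂ → ℂ → ℂ :=
  fun z zb w wb =>
    -(D2 (D2b fun a b c d => Complex.log (detg p a b c d)) z zb w wb)


private lemma pow_collapse (u : ℂ) (q : ℝ) (n : ℕ) :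
    (u ^ ((q : ℝ) : ℂ)) ^ (-(n : ℂ)) = u ^ ((-(n * q) : ℝ) : ℂ) := by
  rw [Complex.cpow_neg]
  rw [show ((-(n * q) : ℝ) : ℂ) = -(((n * q : ℝ)) : ℂ) by push_cast; ring, Complex.cpow_neg]
  congr 1
  rw [show ((n : ℂ)) = ((n : ℕ) : ℂ) by norm_num, Complex.cpow_natCast]
  rw [show (((n * q : ℝ)) : ℂ) = (n : ℕ) * ((q : ℝ) : ℂ) by push_cast; ring]
  rw [Complex.cpow_nat_mul]

private lemma Kc_w0 (p : ℝ) (hp : 0 < p) (t s : ℂ) (hu : 1 - t * s ≠ 0) :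
    Kc p t s 0 0
      = (((p + 1) / (p * Real.pi ^ 2) : ℝ) : ℂ) * (1 - t * s) ^ ((-2 - 1 / p : ℝ) : ℂ) := by
  unfold Kc
  simp only [mul_zero, sub_zero]
  rw [show (-2 : ℂ) = -((2 : ℕ) : ℂ) by norm_num, show (-3 : ℂ) = -((3 : ℕ) : ℂ) by norm_num]
  rw [pow_collapse (1 - t * s) (1 / p) 2, pow_collapse (1 - t * s) (1 / p) 3]
  rw [mul_assoc, mul_assoc, ← Complex.cpow_add _ _ hu, ← Complex.cpow_add _ _ hu]
  have e1 : ((-2 + 1 / p : ℝ) : ℂ) + ((-(((2:ℕ):ℝ) * (1 / p)) : ℝ) : ℂ) = ((-2 - 1 / p : ℝ) : ℂ) := by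
    push_cast; ring
  have e2 : ((-2 + 2 / p : ℝ) : ℂ) + ((-(((3:ℕ):ℝ) * (1 / p)) : ℝ) : ℂ) = ((-2 - 1 / p : ℝ) : ℂ) := by
    push_cast; field_simp; ring
  rw [e1, e2, ← add_mul]
  congr 1
  push_cast
  have hppi : (p : ℝ) * Real.pi ^ 2 ≠ 0 := by positivity
  field_simp
  ring

/-- Bergman metric components of `E(1,1,p)` at `(z,0)` with `z` real:
`g_{1 1̄} = (2p+1)/(p(1-z²)²)`, `g_{2 2̄} = 2(p+2)/((p+1)(1-z²)^{1/p})`,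
`g_{1 2̄} = g_{2 1̄} = 0`. -/
theorem stmt_4 (p : ℝ) (hp : 0 < p) (z : ℝ) (hz : z ^ 2 < 1) :
    g11 p (z : ℂ) (z : ℂ) 0 0 = (((2 * p + 1) / (p * (1 - z ^ 2) ^ 2) : ℝ) : ℂ) ∧
      g22 p (z : ℂ) (z : ℂ) 0 0 =
        ((2 * (p + 2) / ((p + 1) * (1 - z ^ 2) ^ (1 / p)) : ℝ) : ℂ) ∧
      g12 p (z : ℂ) (z : ℂ) 0 0 = 0 ∧ g21 p (z : ℂ) (z : ℂ) 0 0 = 0 := by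

  have hπ : Real.pi ≠ 0 := Real.pi_ne_zero
  have hp' : p ≠ 0 := ne_of_gt hp
  have hx : (0:ℝ) < 1 - z ^ 2 := by linarith
  have hbase : (1 : ℂ) - (z : ℂ) * (z : ℂ) = ((1 - z ^ 2 : ℝ) : ℂ) := by push_cast; ring
  set x : ℝ := 1 - z ^ 2 with hxdef
  have hC : (0:ℝ) < (p + 1) / (p * Real.pi ^ 2) := by positivity
  have hxC : ((x : ℝ) : ℂ) ≠ 0 := by exact_mod_cast ne_of_gt hx
  refine ⟨?_, ?_, ?_, ?_⟩
  · -- g11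
    simp only [g11, D1, D1b, logK]
    set μ : ℂ := ((-2 - 1 / p : ℝ) : ℂ) with hμ
    have h1 : ∀ᶠ t : ℂ in nhds (z : ℂ), 0 < (1 - t * (z : ℂ)).re := by
      have hc : ContinuousAt (fun t : ℂ => (1 - t * (z : ℂ)).re) (z : ℂ) := by fun_prop
      have h0 : (0:ℝ) < (1 - (z : ℂ) * (z : ℂ)).re := by
        rw [hbase]; simpa using hx
      exact hc.eventually (eventually_gt_nhds h0)
    have hval : (0:ℝ) <
        ((((p + 1) / (p * Real.pi ^ 2) : ℝ) : ℂ) * ((1 : ℂ) - (z : ℂ) * (z : ℂ)) ^ μ).re := by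
      rw [hbase, hμ, ← Complex.ofReal_cpow hx.le, ← Complex.ofReal_mul, Complex.ofReal_re]
      positivity
    have hslit : ((1 : ℂ) - (z : ℂ) * (z : ℂ)) ∈ Complex.slitPlane :=
      Complex.mem_slitPlane_iff.2 (Or.inl (by rw [hbase]; simpa using hx))
    have h2 : ∀ᶠ t : ℂ in nhds (z : ℂ), 0 <
        ((((p + 1) / (p * Real.pi ^ 2) : ℝ) : ℂ) * (1 - t * (z : ℂ)) ^ μ).re := by
      have hc : ContinuousAt
          (fun t : ℂ => ((((p + 1) / (p * Real.pi ^ 2) : ℝ) : ℂ) * (1 - t * (z : ℂ)) ^ μ).re)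
          (z : ℂ) := by
        apply Complex.continuous_re.continuousAt.comp
        apply ContinuousAt.mul continuousAt_const
        have h1c : ContinuousAt (fun t : ℂ => 1 - t * (z : ℂ)) (z : ℂ) := by fun_prop
        have h2c : ContinuousAt (fun y : ℂ => y ^ μ) (1 - (z : ℂ) * (z : ℂ)) :=
          continuousAt_cpow_const hslit
        exact h2c.comp (f := fun t : ℂ => 1 - t * (z : ℂ)) h1c
      exact hc.eventually (eventually_gt_nhds hval)
    have main : (fun t : ℂ => deriv (fun s => Complex.log (Kc p t s 0 0)) (z : ℂ))
        =ᶠ[nhds (z : ℂ)] fun t => -μ * t / (1 - t * (z : ℂ)) := by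
      filter_upwards [h1, h2] with t ht1 ht2
      have hu0 : (1 : ℂ) - t * (z : ℂ) ≠ 0 := fun h => by rw [h] at ht1; simp at ht1
      have hev : (fun s : ℂ => Complex.log (Kc p t s 0 0)) =ᶠ[nhds (z : ℂ)]
          fun s => Complex.log ((((p + 1) / (p * Real.pi ^ 2) : ℝ) : ℂ) * (1 - t * s) ^ μ) := by
        have hne : ∀ᶠ s : ℂ in nhds (z : ℂ), (1 : ℂ) - t * s ≠ 0 :=
          (by fun_prop : ContinuousAt (fun s : ℂ => 1 - t * s) (z : ℂ)).eventually_ne hu0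
        filter_upwards [hne] with s hs
        rw [Kc_w0 p hp t s hs]
      rw [hev.deriv_eq]
      have hζ : HasDerivAt (fun s : ℂ => 1 - t * s) (-t) (z : ℂ) := by
        simpa using ((hasDerivAt_id (z : ℂ)).const_mul t).const_sub 1
      have hpow := hζ.cpow_const (c := μ) (Complex.mem_slitPlane_iff.2 (Or.inl ht1))
      have hlog := (hpow.const_mul (((p + 1) / (p * Real.pi ^ 2) : ℝ) : ℂ)).clog
        (Complex.mem_slitPlane_iff.2 (Or.inl ht2))
      rw [hlog.deriv]
      have hCne : ((((p + 1) / (p * Real.pi ^ 2) : ℝ)) : ℂ) ≠ 0 := by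
        exact_mod_cast ne_of_gt hC
      have hpne : ((1 : ℂ) - t * (z : ℂ)) ^ μ ≠ 0 := fun h => by rw [h] at ht2; simp at ht2
      rw [Complex.cpow_sub _ _ hu0, Complex.cpow_one]
      generalize hg : (((p + 1) / (p * Real.pi ^ 2) : ℝ) : ℂ) = Cc at hCne ⊢
      field_simp [hCne, hpne, hu0]
    rw [main.deriv_eq]
    have hx0 : ((1 : ℂ) - (z : ℂ) * (z : ℂ)) ≠ 0 := by rw [hbase]; exact hxC
    have hd : HasDerivAt (fun t : ℂ => -μ * t / (1 - t * (z : ℂ)))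
        ((-μ * 1 * (1 - (z : ℂ) * (z : ℂ)) - -μ * (z : ℂ) * -(1 * (z : ℂ)))
          / ((1 : ℂ) - (z : ℂ) * (z : ℂ)) ^ 2) (z : ℂ) :=
      ((hasDerivAt_id (z : ℂ)).const_mul (-μ)).div
        (((hasDerivAt_id (z : ℂ)).mul_const (z : ℂ)).const_sub 1) hx0
    rw [hd.deriv, hbase, hμ]
    have hpz : ((p : ℝ) : ℂ) ≠ 0 := by exact_mod_cast hp'
    push_cast
    field_simp [hpz, hxC]
    push_cast [hxdef]
    ring
  · -- g22
    simp only [g22, D2, D2b, logK]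
    have hq : (0:ℝ) < x ^ (1 / p) := Real.rpow_pos_of_pos hx _
    have hcne : (((x ^ (1 / p) : ℝ)) : ℂ) ≠ 0 := by exact_mod_cast ne_of_gt hq
    have hKs : ∀ w s : ℂ, Kc p (z : ℂ) (z : ℂ) w s
        = (((p - 1) / (p * Real.pi ^ 2) * x ^ (-2 + 1 / p : ℝ) : ℝ) : ℂ)
            * (((x ^ (1 / p) : ℝ) : ℂ) - w * s) ^ (-2 : ℤ)
          + ((2 / (p * Real.pi ^ 2) * x ^ (-2 + 2 / p : ℝ) : ℝ) : ℂ)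
            * (((x ^ (1 / p) : ℝ) : ℂ) - w * s) ^ (-3 : ℤ) := by
      intro w s
      unfold Kc
      rw [hbase, ← Complex.ofReal_cpow hx.le (1 / p), ← Complex.ofReal_cpow hx.le (-2 + 1 / p),
        ← Complex.ofReal_cpow hx.le (-2 + 2 / p),
        show (-2 : ℂ) = ((-2 : ℤ) : ℂ) by norm_num, show (-3 : ℂ) = ((-3 : ℤ) : ℂ) by norm_num,
        Complex.cpow_intCast, Complex.cpow_intCast]
      push_cast
      ring
    have hr3 : x ^ (-2 + 1 / p : ℝ) * (x ^ (1 / p)) ^ (-3 : ℤ) = x ^ (-2 - 2 / p : ℝ) := by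
      rw [← Real.rpow_intCast (x ^ (1 / p)) (-3), ← Real.rpow_mul hx.le, ← Real.rpow_add hx]
      congr 1; push_cast; field_simp; ring
    have hr4 : x ^ (-2 + 2 / p : ℝ) * (x ^ (1 / p)) ^ (-4 : ℤ) = x ^ (-2 - 2 / p : ℝ) := by
      rw [← Real.rpow_intCast (x ^ (1 / p)) (-4), ← Real.rpow_mul hx.le, ← Real.rpow_add hx]
      congr 1; push_cast; field_simp; ring
    have hK0 : ∀ w : ℂ, Kc p (z : ℂ) (z : ℂ) w 0
        = (((p + 1) / (p * Real.pi ^ 2) * x ^ (-2 - 1 / p : ℝ) : ℝ) : ℂ) := by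
      intro w
      have h0 : Kc p (z : ℂ) (z : ℂ) w 0 = Kc p (z : ℂ) (z : ℂ) 0 0 := by
        unfold Kc; norm_num
      rw [h0, Kc_w0 p hp _ _ (by rw [hbase]; exact hxC), hbase,
        ← Complex.ofReal_cpow hx.le, ← Complex.ofReal_mul]
    have hK0pos : (0:ℝ) < (p + 1) / (p * Real.pi ^ 2) * x ^ (-2 - 1 / p : ℝ) := by positivity
    have harith : (2 * ((p - 1) / (p * Real.pi ^ 2) * x ^ (-2 + 1 / p : ℝ))
          * (x ^ (1 / p)) ^ (-3 : ℤ)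
        + 3 * (2 / (p * Real.pi ^ 2) * x ^ (-2 + 2 / p : ℝ)) * (x ^ (1 / p)) ^ (-4 : ℤ))
        / ((p + 1) / (p * Real.pi ^ 2) * x ^ (-2 - 1 / p : ℝ))
        = 2 * (p + 2) / ((p + 1) * x ^ (1 / p)) := by
      rw [show 2 * ((p - 1) / (p * Real.pi ^ 2) * x ^ (-2 + 1 / p : ℝ)) * (x ^ (1 / p)) ^ (-3 : ℤ)
          = 2 * ((p - 1) / (p * Real.pi ^ 2)) * (x ^ (-2 + 1 / p : ℝ) * (x ^ (1 / p)) ^ (-3 : ℤ))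
          by ring, hr3,
        show 3 * (2 / (p * Real.pi ^ 2) * x ^ (-2 + 2 / p : ℝ)) * (x ^ (1 / p)) ^ (-4 : ℤ)
          = 3 * (2 / (p * Real.pi ^ 2)) * (x ^ (-2 + 2 / p : ℝ) * (x ^ (1 / p)) ^ (-4 : ℤ))
          by ring, hr4]
      have hsplit : x ^ (-2 - 2 / p : ℝ) = x ^ (-2 - 1 / p : ℝ) * (x ^ (1 / p : ℝ))⁻¹ := by
        rw [← Real.rpow_neg hx.le, ← Real.rpow_add hx]
        congr 1; ring
      rw [hsplit]
      have hxe : x ^ (-2 - 1 / p : ℝ) ≠ 0 := ne_of_gt (Real.rpow_pos_of_pos hx _)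
      have hp1 : p + 1 ≠ 0 := by positivity
      field_simp
      ring
    have key : ∀ w : ℂ, deriv (fun s => Complex.log (Kc p (z : ℂ) (z : ℂ) w s)) 0
        = w * ((2 * (p + 2) / ((p + 1) * x ^ (1 / p)) : ℝ) : ℂ) := by
      intro w
      have hζ : HasDerivAt (fun s : ℂ => (((x ^ (1 / p) : ℝ)) : ℂ) - w * s) (-w) 0 := by
        simpa using ((hasDerivAt_id (0 : ℂ)).const_mul w).const_sub (((x ^ (1 / p) : ℝ)) : ℂ)
      have h2 : HasDerivAt (fun s : ℂ => ((((x ^ (1 / p) : ℝ)) : ℂ) - w * s) ^ (-2 : ℤ))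
          (((-2 : ℤ) : ℂ) * (((x ^ (1 / p) : ℝ)) : ℂ) ^ (-2 - 1 : ℤ) * -w) 0 := by
        have hg : HasDerivAt (fun y : ℂ => y ^ (-2 : ℤ))
            (((-2 : ℤ) : ℂ) * (((x ^ (1 / p) : ℝ)) : ℂ) ^ (-2 - 1 : ℤ))
            ((fun s : ℂ => (((x ^ (1 / p) : ℝ)) : ℂ) - w * s) 0) := by
          simpa using hasDerivAt_zpow (-2) (((x ^ (1 / p) : ℝ)) : ℂ) (Or.inl hcne)
        simpa [Function.comp_def] using hg.comp 0 hζ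
      have h3 : HasDerivAt (fun s : ℂ => ((((x ^ (1 / p) : ℝ)) : ℂ) - w * s) ^ (-3 : ℤ))
          (((-3 : ℤ) : ℂ) * (((x ^ (1 / p) : ℝ)) : ℂ) ^ (-3 - 1 : ℤ) * -w) 0 := by
        have hg : HasDerivAt (fun y : ℂ => y ^ (-3 : ℤ))
            (((-3 : ℤ) : ℂ) * (((x ^ (1 / p) : ℝ)) : ℂ) ^ (-3 - 1 : ℤ))
            ((fun s : ℂ => (((x ^ (1 / p) : ℝ)) : ℂ) - w * s) 0) := by
          simpa using hasDerivAt_zpow (-3) (((x ^ (1 / p) : ℝ)) : ℂ) (Or.inl hcne)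
        simpa [Function.comp_def] using hg.comp 0 hζ
      have hfun : (fun s : ℂ => Kc p (z : ℂ) (z : ℂ) w s) = fun s : ℂ =>
          (((p - 1) / (p * Real.pi ^ 2) * x ^ (-2 + 1 / p : ℝ) : ℝ) : ℂ)
            * (((x ^ (1 / p) : ℝ) : ℂ) - w * s) ^ (-2 : ℤ)
          + ((2 / (p * Real.pi ^ 2) * x ^ (-2 + 2 / p : ℝ) : ℝ) : ℂ)
            * (((x ^ (1 / p) : ℝ) : ℂ) - w * s) ^ (-3 : ℤ) := funext (hKs w)
      have hf : HasDerivAt (fun s : ℂ => Kc p (z : ℂ) (z : ℂ) w s)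
          ((((p - 1) / (p * Real.pi ^ 2) * x ^ (-2 + 1 / p : ℝ) : ℝ) : ℂ)
              * (((-2 : ℤ) : ℂ) * (((x ^ (1 / p) : ℝ)) : ℂ) ^ (-2 - 1 : ℤ) * -w)
            + ((2 / (p * Real.pi ^ 2) * x ^ (-2 + 2 / p : ℝ) : ℝ) : ℂ)
              * (((-3 : ℤ) : ℂ) * (((x ^ (1 / p) : ℝ)) : ℂ) ^ (-3 - 1 : ℤ) * -w)) 0 := by
        rw [hfun]
        exact (h2.const_mul _).add (h3.const_mul _)
      have hsl : (fun s : ℂ => Kc p (z : ℂ) (z : ℂ) w s) 0 ∈ Complex.slitPlane := by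
        show Kc p (z : ℂ) (z : ℂ) w 0 ∈ Complex.slitPlane
        rw [hK0 w]
        exact Complex.mem_slitPlane_iff.2 (Or.inl (by rw [Complex.ofReal_re]; exact hK0pos))
      rw [(hf.clog hsl).deriv]
      show _ / Kc p (z : ℂ) (z : ℂ) w 0 = _
      rw [hK0 w]
      have hnum : (((p - 1) / (p * Real.pi ^ 2) * x ^ (-2 + 1 / p : ℝ) : ℝ) : ℂ)
              * (((-2 : ℤ) : ℂ) * (((x ^ (1 / p) : ℝ)) : ℂ) ^ (-2 - 1 : ℤ) * -w)
            + ((2 / (p * Real.pi ^ 2) * x ^ (-2 + 2 / p : ℝ) : ℝ) : ℂ)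
              * (((-3 : ℤ) : ℂ) * (((x ^ (1 / p) : ℝ)) : ℂ) ^ (-3 - 1 : ℤ) * -w)
          = w * (((2 * ((p - 1) / (p * Real.pi ^ 2) * x ^ (-2 + 1 / p : ℝ))
              * (x ^ (1 / p)) ^ (-3 : ℤ)
            + 3 * (2 / (p * Real.pi ^ 2) * x ^ (-2 + 2 / p : ℝ)) * (x ^ (1 / p)) ^ (-4 : ℤ)
            : ℝ)) : ℂ) := by
        push_cast
        ring
      rw [hnum, mul_div_assoc, ← Complex.ofReal_div, harith]
    rw [funext key]
    set_option linter.unnecessarySimpa false in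
    simpa using ((hasDerivAt_id (0 : ℂ)).mul_const
      (((2 * (p + 2) / ((p + 1) * x ^ (1 / p)) : ℝ)) : ℂ)).deriv
  · -- g12
    simp only [g12, D1, D2b, logK]
    have h : ∀ t : ℂ, deriv (fun s : ℂ => Complex.log (Kc p t (z : ℂ) 0 s)) 0 = 0 := by
      intro t
      have hconst : (fun s : ℂ => Complex.log (Kc p t (z : ℂ) 0 s))
          = fun _ => Complex.log (Kc p t (z : ℂ) 0 0) := by
        funext s; unfold Kc; norm_num
      rw [hconst, deriv_const]
    simp only [h, deriv_const]
  · -- g21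
    simp only [g21, D2, D1b, logK]
    have hconst : (fun w : ℂ => deriv (fun s : ℂ => Complex.log (Kc p (z : ℂ) s w 0)) (z : ℂ))
        = fun _ => deriv (fun s : ℂ => Complex.log (Kc p (z : ℂ) s 0 0)) (z : ℂ) := by
      funext w; congr 1; funext s; unfold Kc; norm_num
    rw [hconst, deriv_const]
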